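/- Let E₁ be an elliptic curve in Weierstrass form over a field and G a finite subgroup of E₁ of prime order ℓ. Then the map sending a point P ∉ G to the pair (x(P) + Σ_{Q∈G\{0}} (x(P+Q) − x(Q)), y(P) + Σ_{Q∈G\{0}} (y(P+Q) − y(Q))) is invariant under translation by every element of G, i.e., replacing P by P + R for R ∈ G yields the same value. -/

import Mathlib

namespace VeluStatement

variable {F : Type*} [Field F] {W : WeierstrassCurve.Affine F}

/-- The `x`-coordinate of a point on a Weierstrass curve (junk value `0` at infinity). -/
def px : W.Point → F
  | .zero => 0
  | @WeierstrassCurve.Affine.Point.some _ _ _ x _ _ => x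

/-- The `y`-coordinate of a point on a Weierstrass curve (junk value `0` at infinity). -/
def py : W.Point → F
  | .zero => 0
  | @WeierstrassCurve.Affine.Point.some _ _ _ _ y _ => y

open Classical in
lemma key (G : AddSubgroup W.Point) (hfin : (G : Set W.Point).Finite)
    (f : W.Point → F) (hf0 : f 0 = 0) (P R : W.Point) (hR : R ∈ G) :
    f (P + R) + ∑ᶠ Q ∈ (G : Set W.Point) \ {0}, (f (P + R + Q) - f Q) =
      f P + ∑ᶠ Q ∈ (G : Set W.Point) \ {0}, (f (P + Q) - f Q) := by
  classical
  have hd : ((G : Set W.Point) \ {0}).Finite := hfin.diff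
  have h0 : (0 : W.Point) ∈ hfin.toFinset := by simp [G.zero_mem]
  have hts : hd.toFinset = hfin.toFinset.erase 0 := by
    ext Q; simp [Set.mem_diff, and_comm]
  have step : ∀ P' : W.Point,
      f P' + ∑ᶠ Q ∈ (G : Set W.Point) \ {0}, (f (P' + Q) - f Q)
        = ∑ Q ∈ hfin.toFinset, (f (P' + Q) - f Q) := by
    intro P'
    rw [finsum_mem_eq_finite_toFinset_sum _ hd, hts,
      ← Finset.add_sum_erase _ _ h0]
    simp [hf0]
  rw [step, step, Finset.sum_sub_distrib, Finset.sum_sub_distrib]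
  congr 1
  apply Finset.sum_nbij' (fun Q => R + Q) (fun Q => -R + Q)
  · intro Q hQ
    simp only [Set.Finite.mem_toFinset, SetLike.mem_coe] at *
    exact G.add_mem hR hQ
  · intro Q hQ
    simp only [Set.Finite.mem_toFinset, SetLike.mem_coe] at *
    exact G.add_mem (G.neg_mem hR) hQ
  · intro Q hQ; abel
  · intro Q hQ; abel
  · intro Q hQ
    rw [← add_assoc]

open Classical in
/-- Vélu: for a finite subgroup `G` of prime order `ℓ` of an elliptic curve `E₁` in
Weierstrass form, the map
`P ↦ (x(P) + Σ_{Q∈G\{0}} (x(P+Q) − x(Q)), y(P) + Σ_{Q∈G\{0}} (y(P+Q) − y(Q)))`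
is invariant under translation by any element `R ∈ G`, for `P ∉ G`. -/
theorem velu_translation_invariant (G : AddSubgroup W.Point) (ℓ : ℕ)
    (hℓ : ℓ.Prime) (hG : Nat.card G = ℓ)
    (P : W.Point) (hP : P ∉ G) (R : W.Point) (hR : R ∈ G) :
    px (P + R) + ∑ᶠ Q ∈ (G : Set W.Point) \ {0}, (px (P + R + Q) - px Q) =
      px P + ∑ᶠ Q ∈ (G : Set W.Point) \ {0}, (px (P + Q) - px Q) ∧
    py (P + R) + ∑ᶠ Q ∈ (G : Set W.Point) \ {0}, (py (P + R + Q) - py Q) =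
      py P + ∑ᶠ Q ∈ (G : Set W.Point) \ {0}, (py (P + Q) - py Q) := by
  have : Finite G := Nat.finite_of_card_ne_zero (by rw [hG]; exact hℓ.pos.ne')
  have hfin : (G : Set W.Point).Finite := Set.toFinite _
  exact ⟨key G hfin px rfl P R hR, key G hfin py rfl P R hR⟩

end VeluStatement
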